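/- Characterization of contractive formal multipliers: let F, F' be complex Hilbert spaces, let (H, (π_n)_{n ∈ ℤ^d}) and (H', (π'_n)_{n ∈ ℤ^d}) be coefficient data of formal reproducing kernel Hilbert spaces with coefficient spaces F and F', with (π'_n) separating. Let S : ℤ^d → L(F, F') be such that for every n ∈ ℤ^d the partial sums Σ_{|ℓ| ≤ L} S(n−ℓ) ∘ π_ℓ converge in the weak operator topology as L → ∞. Then for all n, m ∈ ℤ^d the iterated WOT sums Γ(n, m) := Σ_ℓ ( Σ_{ℓ'} S(n−ℓ) π_ℓ π_{ℓ'}^* S(m−ℓ')^* ) exist (in either order of summation, with the same value), and the following are equivalent: (i) there exists a bounded linear operator M : H → H' with ‖M‖ ≤ 1 such that for every f ∈ H and n ∈ ℤ^d, π'_n(M f) equals the weak limit of Σ_{|ℓ| ≤ L} S(n−ℓ)(π_ℓ f); (ii) the kernel (n, m) ↦ π'_n (π'_m)^* − Γ(n, m) is a positive kernel. Moreover, when these hold the operator M is unique, and M is a coisometry (M M^* = I_{H'}) if and only if π'_n (π'_m)^* = Γ(n, m) for all n, m ∈ ℤ^d. -/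

import Mathlib

open ContinuousLinearMap Filter
open scoped ComplexOrder

/-- The finite "ball" `{ℓ ∈ ℤ^d : |ℓ₁| + ⋯ + |ℓ_d| ≤ L}`. -/
noncomputable def intBall (d L : ℕ) : Finset (Fin d → ℤ) :=
  (Finset.Icc (fun _ => -(L : ℤ)) fun _ => (L : ℤ)).filter fun ℓ => ∑ i, |ℓ i| ≤ (L : ℤ)

/-- Convergence of a sequence of bounded operators in the weak operator topology. -/
def WOTTendsto {X Y : Type*} [NormedAddCommGroup X] [InnerProductSpace ℂ X]
    [NormedAddCommGroup Y] [InnerProductSpace ℂ Y]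
    (T : ℕ → X →L[ℂ] Y) (T0 : X →L[ℂ] Y) : Prop :=
  ∀ x y, Tendsto (fun L => (inner ℂ (T L x) y : ℂ)) atTop (nhds (inner ℂ (T0 x) y : ℂ))

/-- An operator-valued kernel `K : ℤ^d × ℤ^d → L(F)` is a positive kernel if
`∑_{n,m} ⟨K(n,m) u(m), u(n)⟩ ≥ 0` for every finitely supported `u : ℤ^d → F`. -/
def IsPosKernel {d : ℕ} {F : Type*} [NormedAddCommGroup F] [InnerProductSpace ℂ F]
    (K : (Fin d → ℤ) → (Fin d → ℤ) → F →L[ℂ] F) : Prop :=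
  ∀ u : (Fin d → ℤ) →₀ F,
    0 ≤ ∑ n ∈ u.support, ∑ m ∈ u.support, (inner ℂ (K n m (u m)) (u n) : ℂ)

section helpers
set_option linter.unusedSectionVars false

variable {X Y Z : Type*} [NormedAddCommGroup X] [InnerProductSpace ℂ X] [CompleteSpace X]
  [NormedAddCommGroup Y] [InnerProductSpace ℂ Y] [CompleteSpace Y]
  [NormedAddCommGroup Z] [InnerProductSpace ℂ Z] [CompleteSpace Z]

lemma WOTTendsto.congr' {A B : ℕ → X →L[ℂ] Y} {A0 : X →L[ℂ] Y}
    (h : WOTTendsto A A0) (hAB : ∀ L, B L = A L) : WOTTendsto B A0 := by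
  intro x y; simpa only [hAB] using h x y

lemma WOTTendsto.congr_lim {A : ℕ → X →L[ℂ] Y} {A0 A1 : X →L[ℂ] Y}
    (h : WOTTendsto A A0) (hA : A0 = A1) : WOTTendsto A A1 := hA ▸ h

lemma WOTTendsto.adj {A : ℕ → X →L[ℂ] Y} {A0 : X →L[ℂ] Y}
    (h : WOTTendsto A A0) : WOTTendsto (fun L => adjoint (A L)) (adjoint A0) := by
  intro x y
  have key : ∀ B : X →L[ℂ] Y, (inner ℂ (adjoint B x) y : ℂ) = starRingEnd ℂ (inner ℂ (B y) x) := by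
    intro B; rw [adjoint_inner_left, ← inner_conj_symm]
  simp only [key]
  exact (Complex.continuous_conj.tendsto _).comp (h y x)

lemma WOTTendsto.compL {A : ℕ → X →L[ℂ] Y} {A0 : X →L[ℂ] Y}
    (h : WOTTendsto A A0) (C : Y →L[ℂ] Z) :
    WOTTendsto (fun L => C ∘L A L) (C ∘L A0) := by
  intro x y
  simp only [coe_comp', Function.comp_apply, ← adjoint_inner_right C]
  exact h x (adjoint C y)

lemma WOTTendsto.compR {A : ℕ → X →L[ℂ] Y} {A0 : X →L[ℂ] Y}
    (h : WOTTendsto A A0) (C : Z →L[ℂ] X) :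
    WOTTendsto (fun L => A L ∘L C) (A0 ∘L C) := by
  intro x y
  exact h (C x) y

lemma sum_comp_adjoint {ι : Type*} (s : Finset ι) (B : ι → X →L[ℂ] Y) (C : X →L[ℂ] Z) :
    ∑ i ∈ s, (C ∘L adjoint (B i)) = C ∘L adjoint (∑ i ∈ s, B i) := by
  rw [map_sum (adjoint (𝕜 := ℂ)) B s]
  ext x
  simp [sum_apply]

lemma double_sum_inner {ι : Type*} (C : ι → X →L[ℂ] Z) (s : Finset ι) (u : ι → Z) :
    ∑ n ∈ s, ∑ m ∈ s, (inner ℂ ((C n) (adjoint (C m) (u m))) (u n) : ℂ)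
      = ((‖∑ m ∈ s, adjoint (C m) (u m)‖ ^ 2 : ℝ) : ℂ) := by
  have key : ∑ n ∈ s, ∑ m ∈ s, (inner ℂ ((C n) (adjoint (C m) (u m))) (u n) : ℂ)
      = inner ℂ (∑ m ∈ s, adjoint (C m) (u m)) (∑ n ∈ s, adjoint (C n) (u n)) := by
    rw [sum_inner, Finset.sum_comm]
    refine Finset.sum_congr rfl fun m _ => ?_
    rw [inner_sum]
    refine Finset.sum_congr rfl fun n _ => ?_
    rw [← adjoint_inner_right, adjoint_inner_left]
  rw [key, inner_self_eq_norm_sq_to_K]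
  norm_cast

end helpers

set_option maxHeartbeats 2000000 in
/-- **Characterization of contractive formal multipliers.**
With `T(n)` the WOT limits of the convolution sums `∑_ℓ S(n-ℓ) π_ℓ`:
the iterated WOT sums `Γ(n,m)` of `S(n-ℓ) π_ℓ π_{ℓ'}* S(m-ℓ')*` exist in either order
and equal `T(n) T(m)*`; there is a contractive multiplication operator `M` with
`π'_n (M f) = T(n) f` iff the kernel `π'_n π'_m* - Γ(n,m)` is positive; such `M` is
unique; and `M` is a coisometry iff `π'_n π'_m* = Γ(n,m)` for all `n, m`. -/
theorem contractive_multiplier_characterization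
    {d : ℕ} {F F' H H' : Type*}
    [NormedAddCommGroup F] [InnerProductSpace ℂ F] [CompleteSpace F]
    [NormedAddCommGroup F'] [InnerProductSpace ℂ F'] [CompleteSpace F']
    [NormedAddCommGroup H] [InnerProductSpace ℂ H] [CompleteSpace H]
    [NormedAddCommGroup H'] [InnerProductSpace ℂ H'] [CompleteSpace H']
    (π : (Fin d → ℤ) → H →L[ℂ] F) (π' : (Fin d → ℤ) → H' →L[ℂ] F')
    (hsep' : ∀ g : H', (∀ n, π' n g = 0) → g = 0)
    (S : (Fin d → ℤ) → F →L[ℂ] F')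
    (T : (Fin d → ℤ) → H →L[ℂ] F')
    (hT : ∀ n, WOTTendsto (fun L => ∑ ℓ ∈ intBall d L, S (n - ℓ) ∘L π ℓ) (T n)) :
    (∀ n m : Fin d → ℤ,
      (∀ ℓ, WOTTendsto
        (fun L' => ∑ ℓ' ∈ intBall d L',
          S (n - ℓ) ∘L π ℓ ∘L adjoint (π ℓ') ∘L adjoint (S (m - ℓ')))
        (S (n - ℓ) ∘L π ℓ ∘L adjoint (T m))) ∧
      WOTTendsto (fun L => ∑ ℓ ∈ intBall d L, S (n - ℓ) ∘L π ℓ ∘L adjoint (T m))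
        (T n ∘L adjoint (T m)) ∧
      (∀ ℓ', WOTTendsto
        (fun L => ∑ ℓ ∈ intBall d L,
          S (n - ℓ) ∘L π ℓ ∘L adjoint (π ℓ') ∘L adjoint (S (m - ℓ')))
        (T n ∘L adjoint (π ℓ') ∘L adjoint (S (m - ℓ')))) ∧
      WOTTendsto (fun L' => ∑ ℓ' ∈ intBall d L', T n ∘L adjoint (π ℓ') ∘L adjoint (S (m - ℓ')))
        (T n ∘L adjoint (T m))) ∧
    ((∃ M : H →L[ℂ] H', ‖M‖ ≤ 1 ∧ ∀ n f, π' n (M f) = T n f) ↔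
      IsPosKernel fun n m => π' n ∘L adjoint (π' m) - T n ∘L adjoint (T m)) ∧
    (∀ M M' : H →L[ℂ] H',
      (∀ n f, π' n (M f) = T n f) → (∀ n f, π' n (M' f) = T n f) → M = M') ∧
    (∀ M : H →L[ℂ] H', ‖M‖ ≤ 1 → (∀ n f, π' n (M f) = T n f) →
      (M ∘L adjoint M = 1 ↔ ∀ n m, π' n ∘L adjoint (π' m) = T n ∘L adjoint (T m))) := by
  classical
  -- the kernel sum identity
  have hker_sum : ∀ u : (Fin d → ℤ) →₀ F',
      ∑ n ∈ u.support, ∑ m ∈ u.support,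
        (inner ℂ (((π' n ∘L adjoint (π' m)) - (T n ∘L adjoint (T m))) (u m)) (u n) : ℂ)
      = ((‖∑ m ∈ u.support, adjoint (π' m) (u m)‖ ^ 2
          - ‖∑ m ∈ u.support, adjoint (T m) (u m)‖ ^ 2 : ℝ) : ℂ) := by
    intro u
    have h1 := double_sum_inner π' u.support ⇑u
    have h2 := double_sum_inner T u.support ⇑u
    simp only [sub_apply, coe_comp', Function.comp_apply, inner_sub_left,
      Finset.sum_sub_distrib]
    rw [h1, h2]
    push_cast
    ring
  -- the dense span of the adjoint ranges
  set Φ : ((Fin d → ℤ) →₀ F') →ₗ[ℂ] H' :=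
    Finsupp.lsum ℂ (fun n => ((adjoint (π' n) : F' →L[ℂ] H') : F' →ₗ[ℂ] H')) with hΦdef
  have hΦ : ∀ u : (Fin d → ℤ) →₀ F',
      Φ u = ∑ m ∈ u.support, adjoint (π' m) (u m) := fun u => rfl
  have hΦsingle : ∀ (n : Fin d → ℤ) (v : F'), Φ (Finsupp.single n v) = adjoint (π' n) v := by
    intro n v; simp [hΦdef]
  have hdense : Dense ((LinearMap.range Φ : Submodule ℂ H') : Set H') := by
    rw [Submodule.dense_iff_topologicalClosure_eq_top,
      Submodule.topologicalClosure_eq_top_iff, Submodule.eq_bot_iff]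
    intro g hg
    refine hsep' g fun n => ?_
    have hv : ∀ v : F', (inner ℂ (adjoint (π' n) v) g : ℂ) = 0 := fun v =>
      (Submodule.mem_orthogonal _ g).1 hg _ ⟨Finsupp.single n v, hΦsingle n v⟩
    have := hv (π' n g)
    rw [adjoint_inner_left] at this
    exact inner_self_eq_zero.mp this
  refine ⟨?_, ?_, ?_, ?_⟩
  · -- Part 1: existence of the iterated WOT sums
    intro n m
    refine ⟨?_, ?_, ?_, ?_⟩
    · intro ℓ
      refine WOTTendsto.congr' (WOTTendsto.congr_lim
        ((hT m).adj.compL (S (n - ℓ) ∘L π ℓ)) ?_) ?_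
      · ext x; simp
      · intro L'
        rw [← sum_comp_adjoint]
        refine Finset.sum_congr rfl fun ℓ' _ => ?_
        ext x; simp
    · refine WOTTendsto.congr' ((hT n).compR (adjoint (T m))) fun L => ?_
      ext x; simp [sum_apply]
    · intro ℓ'
      refine WOTTendsto.congr' (WOTTendsto.congr_lim
        ((hT n).compR (adjoint (π ℓ') ∘L adjoint (S (m - ℓ')))) ?_) fun L => ?_
      · ext x; simp
      · ext x; simp [sum_apply]
    · refine WOTTendsto.congr' ((hT m).adj.compL (T n)) fun L' => ?_
      rw [← sum_comp_adjoint]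
      refine Finset.sum_congr rfl fun ℓ' _ => ?_
      ext x; simp
  · -- Part 2: existence of contractive M iff positive kernel
    constructor
    · rintro ⟨M, hM, hMf⟩ u
      rw [hker_sum u, Complex.zero_le_real, sub_nonneg]
      have hTm : ∀ m, adjoint (T m) = adjoint M ∘L adjoint (π' m) := by
        intro m
        have : T m = (π' m) ∘L M := by ext f; exact (hMf m f).symm
        rw [this, adjoint_comp]
      set g := ∑ m ∈ u.support, adjoint (π' m) (u m) with hg
      have hsum : ∑ m ∈ u.support, adjoint (T m) (u m) = adjoint M g := by
        rw [hg, map_sum]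
        exact Finset.sum_congr rfl fun m _ => by rw [hTm m]; rfl
      rw [hsum]
      have hMadj : ‖adjoint M‖ ≤ 1 := by
        rw [(ContinuousLinearMap.adjoint :
          (H →L[ℂ] H') ≃ₗᵢ⋆[ℂ] (H' →L[ℂ] H)).norm_map M]
        exact hM
      have h1 : ‖adjoint M g‖ ≤ ‖g‖ := by
        calc ‖adjoint M g‖ ≤ ‖adjoint M‖ * ‖g‖ := le_opNorm _ _
          _ ≤ 1 * ‖g‖ := by gcongr
          _ = ‖g‖ := one_mul _
      exact pow_le_pow_left₀ (norm_nonneg _) h1 2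
    · intro hpos
      -- the companion map Ψ
      set Ψ : ((Fin d → ℤ) →₀ F') →ₗ[ℂ] H :=
        Finsupp.lsum ℂ (fun n => ((adjoint (T n) : F' →L[ℂ] H) : F' →ₗ[ℂ] H)) with hΨdef
      have hΨ : ∀ u : (Fin d → ℤ) →₀ F',
          Ψ u = ∑ m ∈ u.support, adjoint (T m) (u m) := fun u => rfl
      have hΨsingle : ∀ (n : Fin d → ℤ) (v : F'),
          Ψ (Finsupp.single n v) = adjoint (T n) v := by
        intro n v; simp [hΨdef]
      have hbound : ∀ u, ‖Ψ u‖ ≤ ‖Φ u‖ := by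
        intro u
        have h0 := hpos u
        rw [hker_sum u, Complex.zero_le_real, sub_nonneg] at h0
        rw [hΦ, hΨ]
        nlinarith [norm_nonneg (∑ m ∈ u.support, adjoint (T m) (u m)),
          norm_nonneg (∑ m ∈ u.support, adjoint (π' m) (u m))]
      have hker : LinearMap.ker Φ ≤ LinearMap.ker Ψ := by
        intro u hu
        rw [LinearMap.mem_ker] at hu ⊢
        have := hbound u
        rw [hu, norm_zero] at this
        exact norm_le_zero_iff.mp this
      -- the contraction on the range of Φ
      set N : LinearMap.range Φ →ₗ[ℂ] H :=
        ((LinearMap.ker Φ).liftQ Ψ hker).comp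
          (Φ.quotKerEquivRange.symm : LinearMap.range Φ →ₗ[ℂ] _) with hNdef
      have hN : ∀ u : (Fin d → ℤ) →₀ F',
          N ⟨Φ u, LinearMap.mem_range_self Φ u⟩ = Ψ u := by
        intro u
        have h1 : Φ.quotKerEquivRange.symm ⟨Φ u, LinearMap.mem_range_self Φ u⟩
            = Submodule.Quotient.mk u :=
          LinearMap.quotKerEquivRange_symm_apply_image Φ u (LinearMap.mem_range_self Φ u)
        rw [hNdef, LinearMap.comp_apply]
        erw [h1]
        exact Submodule.liftQ_apply _ _ _
      have hNbound : ∀ x : LinearMap.range Φ, ‖N x‖ ≤ 1 * ‖x‖ := by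
        rintro ⟨y, u, rfl⟩
        rw [one_mul, hN u]
        exact (hbound u).trans_eq rfl
      set Nc : (LinearMap.range Φ : Submodule ℂ H') →L[ℂ] H :=
        N.mkContinuous 1 hNbound with hNcdef
      have hNc : ∀ x, Nc x = N x := fun x => rfl
      -- extend by density
      have hdr : DenseRange ((LinearMap.range Φ).subtypeL) := by
        have : DenseRange (Subtype.val : LinearMap.range Φ → H') :=
          hdense.denseRange_val
        exact this
      have h_e' : ∀ x : LinearMap.range Φ,
          ‖x‖ ≤ (1 : NNReal) * ‖(LinearMap.range Φ).subtypeL x‖ := by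
        intro x; simp
      set W : H' →L[ℂ] H :=
        Nc.extend ((LinearMap.range Φ).subtypeL) with hWdef
      have hWnorm : ‖W‖ ≤ 1 := by
        have h2 := Nc.opNorm_extend_le hdr h_e'
        have h3 : ‖Nc‖ ≤ 1 := LinearMap.mkContinuous_norm_le _ zero_le_one _
        calc ‖W‖ ≤ (1 : NNReal) * ‖Nc‖ := h2
          _ ≤ 1 := by simpa using h3
      have hW : ∀ u : (Fin d → ℤ) →₀ F', W (Φ u) = Ψ u := by
        intro u
        have h1 := Nc.extend_eq hdr
          (isUniformEmbedding_of_bound _ h_e').isUniformInducing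
          (⟨Φ u, LinearMap.mem_range_self Φ u⟩ : LinearMap.range Φ)
        have h2 : (LinearMap.range Φ).subtypeL
            (⟨Φ u, LinearMap.mem_range_self Φ u⟩ : LinearMap.range Φ) = Φ u := rfl
        rw [h2] at h1
        rw [← hWdef] at h1
        rw [h1, hNc, hN]
      refine ⟨adjoint W, ?_, ?_⟩
      · rw [(ContinuousLinearMap.adjoint :
          (H' →L[ℂ] H) ≃ₗᵢ⋆[ℂ] (H →L[ℂ] H')).norm_map W]
        exact hWnorm
      · intro n f
        refine ext_inner_right ℂ fun v => ?_
        rw [← adjoint_inner_right, adjoint_inner_left]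
        have h4 : W (adjoint (π' n) v) = adjoint (T n) v := by
          rw [← hΦsingle n v, hW, hΨsingle]
        rw [h4, ← adjoint_inner_right]
  · -- Part 3: uniqueness
    intro M M' h h'
    ext f
    have : ∀ n, π' n (M f - M' f) = 0 := by
      intro n
      rw [map_sub, h n f, h' n f, sub_self]
    have := hsep' _ this
    exact sub_eq_zero.mp this
  · -- Part 4: coisometry characterization
    intro M hM hMf
    have hTm : ∀ m, T m = (π' m) ∘L M := by
      intro m; ext f; exact (hMf m f).symm
    constructor
    · intro hco n m
      rw [hTm n, hTm m, adjoint_comp]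
      have h1 : ∀ x, M (adjoint M x) = x := fun x =>
        congrFun (congrArg DFunLike.coe hco) x
      ext x
      simp [h1]
    · intro heq
      have key : ∀ (m : Fin d → ℤ) (v : F'),
          M (adjoint M (adjoint (π' m) v)) = adjoint (π' m) v := by
        intro m v
        have h1 : ∀ n, π' n (M (adjoint M (adjoint (π' m) v)))
            = π' n (adjoint (π' m) v) := by
          intro n
          have h2 : adjoint M (adjoint (π' m) v) = adjoint (T m) v := by
            rw [hTm m, adjoint_comp]; rfl
          rw [h2, hMf n]
          have h3 := congrFun (congrArg DFunLike.coe (heq n m)) v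
          simpa using h3.symm
        have h4 : ∀ n, π' n (M (adjoint M (adjoint (π' m) v)) - adjoint (π' m) v) = 0 := by
          intro n; rw [map_sub, h1 n, sub_self]
        exact sub_eq_zero.mp (hsep' _ h4)
      have hrange : ∀ y ∈ LinearMap.range Φ, M (adjoint M y) = y := by
        rintro _ ⟨u, rfl⟩
        rw [hΦ u, map_sum, map_sum]
        exact Finset.sum_congr rfl fun m _ => key m (u m)
      have hclosed : IsClosed {y : H' | M (adjoint M y) = y} :=
        isClosed_eq (M.continuous.comp (adjoint M).continuous) continuous_id
      have hsub : ((LinearMap.range Φ : Submodule ℂ H') : Set H')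
          ⊆ {y : H' | M (adjoint M y) = y} := fun y hy => hrange y hy
      have hall : ∀ y : H', M (adjoint M y) = y := by
        intro y
        have := hclosed.closure_subset_iff.2 hsub
        rw [hdense.closure_eq] at this
        exact this (Set.mem_univ y)
      ext y
      simpa using hall y
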